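/- The map ρ(w) = (1 − √(1−w))/(1 + √(1−w)) (principal square root) sends the cut plane ℂ ∖ [1, ∞) into the open unit disk, and satisfies w = 4ρ(w)/(1 + ρ(w))² for all w in the cut plane. -/

import Mathlib

/-- The radial coordinate map `ρ(w) = (1 − √(1−w))/(1 + √(1−w))`, with the principal
square root, sends the cut plane `ℂ ∖ [1, ∞)` into the open unit disk and satisfies
`w = 4ρ/(1+ρ)²`. -/
theorem radial_coordinate (w : ℂ) (hw : ¬ (w.im = 0 ∧ 1 ≤ w.re)) :
    ‖(1 - (1 - w) ^ ((1 : ℂ) / 2)) / (1 + (1 - w) ^ ((1 : ℂ) / 2))‖ < 1 ∧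
    w = 4 * ((1 - (1 - w) ^ ((1 : ℂ) / 2)) / (1 + (1 - w) ^ ((1 : ℂ) / 2))) /
          (1 + (1 - (1 - w) ^ ((1 : ℂ) / 2)) / (1 + (1 - w) ^ ((1 : ℂ) / 2))) ^ 2 := by
  set z : ℂ := 1 - w with hzdef
  have hz : z ≠ 0 := by
    intro h
    apply hw
    have hw1 : w = 1 := by linear_combination -h
    simp [hw1]
  have harg : z.arg ≠ Real.pi := by
    intro h
    rw [Complex.arg_eq_pi_iff] at h
    obtain ⟨hre, him⟩ := h
    apply hw
    have h1 : z.re = 1 - w.re := by simp [hzdef]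
    have h2 : z.im = -w.im := by simp [hzdef]
    constructor
    · rw [h2] at him; linarith
    · rw [h1] at hre; linarith
  set s : ℂ := z ^ ((1 : ℂ) / 2) with hsdef
  have hs2 : s ^ 2 = z := by
    have := Complex.cpow_nat_inv_pow z (by norm_num : (2 : ℕ) ≠ 0)
    rw [hsdef, show ((1 : ℂ) / 2) = ((2 : ℕ) : ℂ)⁻¹ by norm_num]
    exact this
  have hres : 0 < s.re := by
    rw [hsdef, Complex.cpow_def_of_ne_zero hz, Complex.exp_re]
    have him : (Complex.log z * (1 / 2)).im = z.arg / 2 := by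
      simp [Complex.mul_im, Complex.log_im, Complex.log_re]
      ring
    rw [him]
    have h1 : z.arg ≤ Real.pi := Complex.arg_le_pi z
    have h2 : -Real.pi < z.arg := Complex.neg_pi_lt_arg z
    have h3 : z.arg < Real.pi := lt_of_le_of_ne h1 harg
    have hc : 0 < Real.cos (z.arg / 2) :=
      Real.cos_pos_of_mem_Ioo ⟨by linarith, by linarith⟩
    positivity
  have habs : ‖1 - s‖ < ‖1 + s‖ := by
    have h1 : ‖1 - s‖ ^ 2 < ‖1 + s‖ ^ 2 := by
      rw [Complex.sq_norm, Complex.sq_norm, Complex.normSq_apply, Complex.normSq_apply]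
      simp only [Complex.sub_re, Complex.sub_im, Complex.add_re, Complex.add_im,
        Complex.one_re, Complex.one_im]
      nlinarith
    exact lt_of_pow_lt_pow_left₀ 2 (norm_nonneg _) h1
  have hden : (1 : ℂ) + s ≠ 0 := by
    intro h
    have : (1 + s).re = 0 := by rw [h]; simp
    simp [Complex.add_re] at this
    linarith
  constructor
  · rw [norm_div, div_lt_one (norm_pos_iff.mpr hden)]
    simpa using habs
  · have hw2 : w = 1 - s ^ 2 := by rw [hs2]; ring
    have h2 : 1 + (1 - s) / (1 + s) = 2 / (1 + s) := by
      field_simp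
      norm_num
    rw [h2]
    have h2ne : (2 : ℂ) / (1 + s) ≠ 0 := by
      apply div_ne_zero _ hden; norm_num
    field_simp
    linear_combination (4 : ℂ) * hw2
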